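/- Let f be a pReLU neural network of input dimension n and width n (i.e., a finite alternating composition of affine maps Q_p^n → Q_p^n and the coordinatewise pReLU activation, followed by a final affine map). Then either the restriction of f to Z_p^n is an affine map, or there is a ball B ⊆ Z_p^n of radius 1/p and an h ∈ Q_p^n with ‖h‖ = 1/p such that f(x+h) = f(x) for all x ∈ B. -/

import Mathlib

open scoped Classical

noncomputable def pReLU (p : ℕ) [Fact p.Prime] (x : ℚ_[p]) : ℚ_[p] :=
  if ‖x‖ ≤ 1 then x else 0

/-- A `pReLU`-network of width `w`, input dimension `a`, output dimension `b`:
an alternating composition of affine maps (hidden dimensions `≤ w`) and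
coordinatewise `pReLU` activations, starting and ending with an affine map. -/
inductive IsPReLUNet (p : ℕ) [Fact p.Prime] (w : ℕ) : (a b : ℕ) →
    ((Fin a → ℚ_[p]) → (Fin b → ℚ_[p])) → Prop
  | affine (a b : ℕ) (A : Matrix (Fin b) (Fin a) ℚ_[p]) (c : Fin b → ℚ_[p]) :
      IsPReLUNet p w a b (fun x => A.mulVec x + c)
  | step (a b c : ℕ) (hb : b ≤ w) (f : (Fin a → ℚ_[p]) → (Fin b → ℚ_[p]))
      (A : Matrix (Fin c) (Fin b) ℚ_[p]) (d : Fin c → ℚ_[p])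
      (hf : IsPReLUNet p w a b f) :
      IsPReLUNet p w a c (fun x => A.mulVec (fun i => pReLU p (f x i)) + d)

section helpers
variable {p : ℕ} [Fact p.Prime]

lemma pReLU_of_le {x : ℚ_[p]} (h : ‖x‖ ≤ 1) : pReLU p x = x := if_pos h
lemma pReLU_of_gt {x : ℚ_[p]} (h : 1 < ‖x‖) : pReLU p x = 0 := if_neg (not_le.mpr h)

lemma exists_norm_coord {n : ℕ} (v : Fin n → ℚ_[p]) (hv : v ≠ 0) :
    ∃ i, ‖v i‖ = ‖v‖ ∧ v i ≠ 0 := by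
  have hn : Nonempty (Fin n) := by
    by_contra hcon
    exact hv (funext fun i => ((not_nonempty_iff.mp hcon).false i).elim)
  obtain ⟨i, -, hi⟩ := Finset.exists_mem_eq_sup (Finset.univ) Finset.univ_nonempty
    (fun i => ‖v i‖₊)
  refine ⟨i, ?_, ?_⟩
  · rw [Pi.norm_def, hi]
    rfl
  · intro h0
    apply hv
    have : ‖v‖ = 0 := by rw [Pi.norm_def, hi, h0]; simp
    exact norm_eq_zero.mp this

lemma padic_norm_sum_le {ι : Type*} (s : Finset ι) {f : ι → ℚ_[p]} {C : ℝ}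
    (hC : 0 ≤ C) (h : ∀ i ∈ s, ‖f i‖ ≤ C) : ‖∑ i ∈ s, f i‖ ≤ C :=
  IsUltrametricDist.norm_sum_le_of_forall_le_of_nonneg hC h

lemma norm_mulVec_entry_le {n b : ℕ} (M : Matrix (Fin b) (Fin n) ℚ_[p])
    (x : Fin n → ℚ_[p]) (i : Fin b) {C : ℝ} (hC : 0 ≤ C)
    (h : ∀ j, ‖M i j‖ * ‖x j‖ ≤ C) : ‖(M.mulVec x) i‖ ≤ C := by
  show ‖∑ j, M i j * x j‖ ≤ C
  exact padic_norm_sum_le _ hC (fun j _ => by rw [norm_mul]; exact h j)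

end helpers

theorem net_affine_or_directionally_constant (p : ℕ) [Fact p.Prime] (n m : ℕ)
    (F : (Fin n → ℚ_[p]) → (Fin m → ℚ_[p])) (hF : IsPReLUNet p n n m F) :
    (∃ (A : Matrix (Fin m) (Fin n) ℚ_[p]) (c : Fin m → ℚ_[p]),
      ∀ x : Fin n → ℤ_[p],
        F (fun i => (x i : ℚ_[p])) = A.mulVec (fun i => (x i : ℚ_[p])) + c) ∨
    (∃ (v : Fin n → ℤ_[p]) (h : Fin n → ℚ_[p]), ‖h‖ = (p : ℝ)⁻¹ ∧
      ∀ x : Fin n → ℚ_[p], (∀ i, ‖x i - (v i : ℚ_[p])‖ ≤ (p : ℝ)⁻¹) →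
        F (x + h) = F x) := by
  have hp1 : (1:ℝ) < (p:ℝ) := by exact_mod_cast (Fact.out : p.Prime).one_lt
  have hpinv_pos : (0:ℝ) < (p:ℝ)⁻¹ := by positivity
  have hpinv_lt : (p:ℝ)⁻¹ < 1 := by
    rw [inv_lt_one_iff₀]; right; exact hp1
  have hpinv_le : (p:ℝ)⁻¹ ≤ 1 := le_of_lt hpinv_lt
  suffices key : ∀ (a b : ℕ) (G : (Fin a → ℚ_[p]) → (Fin b → ℚ_[p])),
      IsPReLUNet p n a b G → a = n →
      ((∃ (A : Matrix (Fin b) (Fin a) ℚ_[p]) (c : Fin b → ℚ_[p]),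
        ∀ x : Fin a → ℤ_[p],
          G (fun i => (x i : ℚ_[p])) = A.mulVec (fun i => (x i : ℚ_[p])) + c) ∨
      (∃ (v : Fin a → ℤ_[p]) (h : Fin a → ℚ_[p]), ‖h‖ = (p : ℝ)⁻¹ ∧
        ∀ x : Fin a → ℚ_[p], (∀ i, ‖x i - (v i : ℚ_[p])‖ ≤ (p : ℝ)⁻¹) →
          G (x + h) = G x)) by
    exact key n m F hF rfl
  intro a b G hG
  induction hG with
  | affine b' A' c' => exact fun _ => Or.inl ⟨A', c', fun x => rfl⟩
  | step bo co hb f A d hf IH =>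
    intro ha
    subst ha
    rcases IH rfl with ⟨M, c₀, haff⟩ | ⟨v, h, hnh, hc⟩
    case step.inr =>
      refine Or.inr ⟨v, h, hnh, fun x hx => ?_⟩
      show A.mulVec (fun i => pReLU p (f (x + h) i)) + d
          = A.mulVec (fun i => pReLU p (f x i)) + d
      rw [hc x hx]
    case step.inl =>
    -- the inner network is affine on the integer lattice
    have haff' : ∀ x : Fin a → ℚ_[p], (∀ k, ‖x k‖ ≤ 1) →
        f x = M.mulVec x + c₀ := by
      intro x hx
      have := haff (fun k => (⟨x k, hx k⟩ : ℤ_[p]))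
      simpa using this
    by_cases hker : ∃ v0, v0 ≠ 0 ∧ M.mulVec v0 = 0
    · -- singular case: constant direction in the kernel
      obtain ⟨v0, hv0, hMv0⟩ := hker
      obtain ⟨i0, hni0, hvi0⟩ := exists_norm_coord v0 hv0
      set s : ℚ_[p] := (p : ℚ_[p]) * (v0 i0)⁻¹ with hs_def
      set h : Fin a → ℚ_[p] := s • v0 with hh_def
      have hv0n : ‖v0 i0‖ ≠ 0 := norm_ne_zero_iff.mpr hvi0
      have hhn : ‖h‖ = (p:ℝ)⁻¹ := by
        rw [hh_def, norm_smul, hs_def, norm_mul, norm_inv, Padic.norm_p, ← hni0]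
        field_simp
      have hMh : M.mulVec h = 0 := by
        rw [hh_def, Matrix.mulVec_smul, hMv0, smul_zero]
      refine Or.inr ⟨0, h, hhn, fun x hx => ?_⟩
      have hx1 : ∀ k, ‖x k‖ ≤ 1 := by
        intro k
        have := hx k
        simp only [Pi.zero_apply] at this
        calc ‖x k‖ ≤ (p:ℝ)⁻¹ := by simpa using this
          _ ≤ 1 := hpinv_le
      have hxh1 : ∀ k, ‖(x + h) k‖ ≤ 1 := by
        intro k
        refine le_trans (Padic.nonarchimedean _ _) (max_le (hx1 k) ?_)
        exact le_trans (le_trans (norm_le_pi_norm h k) hhn.le) hpinv_le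
      show A.mulVec (fun i => pReLU p (f (x + h) i)) + d
          = A.mulVec (fun i => pReLU p (f x i)) + d
      rw [haff' _ hxh1, haff' _ hx1, Matrix.mulVec_add, hMh, add_zero]
    · -- injective case: M is square and invertible
      push_neg at hker
      have hinj : Function.Injective M.mulVecLin := by
        rw [← LinearMap.ker_eq_bot, LinearMap.ker_eq_bot']
        intro v hv
        by_contra h0
        exact hker v h0 hv
      have hnb : a ≤ bo := by
        have := LinearMap.finrank_le_finrank_of_injective hinj
        simpa [Module.finrank_fin_fun] using this
      have hbn : bo = a := le_antisymm hb hnb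
      subst hbn
      have hdet : M.det ≠ 0 := by
        intro h0
        obtain ⟨v0, hv0, hMv0⟩ := Matrix.exists_mulVec_eq_zero_iff.mpr h0
        exact hker v0 hv0 hMv0
      have hMinv : M * M⁻¹ = 1 := Matrix.mul_nonsing_inv M (isUnit_iff_ne_zero.mpr hdet)
      by_cases hall : ∀ i, ((∀ j, ‖M i j‖ ≤ 1) ∧ ‖c₀ i‖ ≤ 1) ∨
          (1 < ‖c₀ i‖ ∧ ∀ j, ‖M i j‖ < ‖c₀ i‖)
      · -- every coordinate is uniformly kept or uniformly zeroed: affine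
        set D : Matrix (Fin bo) (Fin bo) ℚ_[p] :=
          Matrix.diagonal (fun i =>
            if (∀ j, ‖M i j‖ ≤ 1) ∧ ‖c₀ i‖ ≤ 1 then (1:ℚ_[p]) else 0) with hD_def
        refine Or.inl ⟨A * D * M, (A * D).mulVec c₀ + d, fun x => ?_⟩
        set y : Fin bo → ℚ_[p] := fun i => (x i : ℚ_[p]) with hy_def
        have hy1 : ∀ k, ‖y k‖ ≤ 1 := fun k => (x k).2
        have hfx : f y = M.mulVec y + c₀ := haff x
        have hσ : (fun i => pReLU p (f y i)) = D.mulVec (M.mulVec y + c₀) := by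
          funext i
          rw [hfx, hD_def, Matrix.mulVec_diagonal]
          by_cases hi : (∀ j, ‖M i j‖ ≤ 1) ∧ ‖c₀ i‖ ≤ 1
          · rw [if_pos hi, one_mul]
            refine pReLU_of_le ?_
            refine le_trans (Padic.nonarchimedean _ _) (max_le ?_ hi.2)
            refine norm_mulVec_entry_le M y i zero_le_one (fun j => ?_)
            calc ‖M i j‖ * ‖y j‖ ≤ 1 * 1 :=
              mul_le_mul (hi.1 j) (hy1 j) (norm_nonneg _) zero_le_one
              _ = 1 := mul_one 1
          · rw [if_neg hi, zero_mul]
            have hi' := (hall i).resolve_left hi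
            refine pReLU_of_gt ?_
            have hmv : ‖(M.mulVec y) i‖ < ‖c₀ i‖ := by
              have hnn : Nonempty (Fin bo) := ⟨i⟩
              obtain ⟨jr, -, hjr⟩ := Finset.exists_max_image Finset.univ
                (fun j => ‖M i j‖) Finset.univ_nonempty
              have hjr' : ∀ j, ‖M i j‖ ≤ ‖M i jr‖ := fun j => hjr j (Finset.mem_univ j)
              refine lt_of_le_of_lt ?_ (hi'.2 jr)
              refine norm_mulVec_entry_le M y i (norm_nonneg _) (fun j => ?_)
              calc ‖M i j‖ * ‖y j‖ ≤ ‖M i j‖ * 1 :=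
                    mul_le_mul_of_nonneg_left (hy1 j) (norm_nonneg _)
                _ = ‖M i j‖ := mul_one _
                _ ≤ ‖M i jr‖ := hjr' j
            have heq : ‖(M.mulVec y + c₀) i‖ = ‖c₀ i‖ := by
              show ‖(M.mulVec y) i + c₀ i‖ = ‖c₀ i‖
              rw [Padic.add_eq_max_of_ne (ne_of_lt hmv)]
              exact max_eq_right (le_of_lt hmv)
            rw [heq]
            exact hi'.1
        show A.mulVec (fun i => pReLU p (f y i)) + d
            = (A * D * M).mulVec y + ((A * D).mulVec c₀ + d)
        rw [hσ, Matrix.mulVec_add, Matrix.mulVec_add, ← Matrix.mulVec_mulVec,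
          ← Matrix.mulVec_mulVec, ← Matrix.mulVec_mulVec, add_assoc]
      · -- a genuinely mixed coordinate exists: constant direction
        obtain ⟨i, hi⟩ := not_forall.mp hall
        rw [not_or] at hi
        obtain ⟨hK, hZ⟩ := hi
        have hnn : Nonempty (Fin bo) := ⟨i⟩
        obtain ⟨js, -, hjs⟩ := Finset.exists_max_image Finset.univ
          (fun j => ‖M i j‖) Finset.univ_nonempty
        have hRle' : ∀ j, ‖M i j‖ ≤ ‖M i js‖ := fun j => hjs j (Finset.mem_univ j)
        set R : ℝ := ‖M i js‖ with hR_def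
        have hRle : ∀ j, ‖M i j‖ ≤ R := hRle'
        have hmain : 1 < R ∧ ‖c₀ i‖ ≤ R := by
          by_cases hc1 : ‖c₀ i‖ ≤ 1
          · have hnsm : ¬(∀ j, ‖M i j‖ ≤ 1) := fun hj' => hK ⟨hj', hc1⟩
            obtain ⟨j0, hj0⟩ := not_forall.mp hnsm
            have h1j : 1 < ‖M i j0‖ := not_le.mp hj0
            exact ⟨lt_of_lt_of_le h1j (hRle j0), le_trans hc1 (le_of_lt (lt_of_lt_of_le h1j (hRle j0)))⟩
          · push_neg at hc1
            have : ¬(∀ j, ‖M i j‖ < ‖c₀ i‖) := fun hj' => hZ ⟨hc1, hj'⟩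
            obtain ⟨j0, hj0⟩ := not_forall.mp this
            have hcj : ‖c₀ i‖ ≤ ‖M i j0‖ := not_lt.mp hj0
            exact ⟨lt_of_lt_of_le hc1 (le_trans hcj (hRle j0)),
              le_trans hcj (hRle j0)⟩
        obtain ⟨hR1, hcR⟩ := hmain
        have hRpos : (0:ℝ) < R := lt_trans one_pos hR1
        set π : ℚ_[p] := M i js with hπ_def
        have hπn : ‖π‖ = R := rfl
        have hπ0 : π ≠ 0 := by
          intro h0
          rw [h0, norm_zero] at hπn
          exact absurd hπn.symm (ne_of_gt hRpos)
        set w : Fin bo → ℚ_[p] := Pi.single js (1 - c₀ i / π) with hw_def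
        have hw1 : ∀ k, ‖w k‖ ≤ 1 := by
          intro k
          rw [hw_def]
          by_cases hk : k = js
          · subst hk
            rw [Pi.single_eq_same]
            refine le_trans (by
              rw [sub_eq_add_neg]
              exact Padic.nonarchimedean _ _) (max_le (by simp) ?_)
            rw [norm_neg, norm_div, hπn]
            rw [div_le_one hRpos]
            exact hcR
          · rw [Pi.single_eq_of_ne hk]
            simp
        have hgw : (M.mulVec w) i = π - c₀ i := by
          rw [hw_def, Matrix.mulVec_single]
          show π * (1 - c₀ i / π) = π - c₀ i
          field_simp
        set u : Fin bo → ℚ_[p] := (M⁻¹).mulVec (Pi.single i 1) with hu_def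
        have hu : M.mulVec u = Pi.single i 1 := by
          rw [hu_def, Matrix.mulVec_mulVec, hMinv, Matrix.one_mulVec]
        have hu0 : u ≠ 0 := by
          intro h0
          rw [h0, Matrix.mulVec_zero] at hu
          have := congrFun hu i
          rw [Pi.single_eq_same] at this
          exact one_ne_zero this.symm
        obtain ⟨i0, hui0, hui0'⟩ := exists_norm_coord u hu0
        have hun : ‖u i0‖ ≠ 0 := norm_ne_zero_iff.mpr hui0'
        have hupos : (0:ℝ) < ‖u‖ := by
          rw [← hui0]
          exact norm_pos_iff.mpr hui0'
        set t : ℚ_[p] := (p : ℚ_[p]) * (u i0)⁻¹ with ht_def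
        set h : Fin bo → ℚ_[p] := t • u with hh_def
        have hhn : ‖h‖ = (p:ℝ)⁻¹ := by
          rw [hh_def, norm_smul, ht_def, norm_mul, norm_inv, Padic.norm_p, ← hui0]
          field_simp
        have hMh : M.mulVec h = Pi.single i t := by
          rw [hh_def, Matrix.mulVec_smul, hu]
          funext k
          by_cases hk : k = i
          · subst hk; simp
          · simp [Pi.single_eq_of_ne hk]
        have hRu : 1 ≤ R * ‖u‖ := by
          have h1 : ‖(M.mulVec u) i‖ = 1 := by
            rw [hu, Pi.single_eq_same, norm_one]
          rw [← h1]
          refine norm_mulVec_entry_le M u i (by positivity) (fun j => ?_)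
          exact mul_le_mul (hRle j) (norm_le_pi_norm u j) (norm_nonneg _)
            (le_of_lt hRpos)
        have htle : ‖t‖ ≤ (p:ℝ)⁻¹ * R := by
          rw [ht_def, norm_mul, norm_inv, Padic.norm_p, hui0]
          refine mul_le_mul_of_nonneg_left ?_ (le_of_lt hpinv_pos)
          rw [inv_eq_one_div, div_le_iff₀ hupos]
          linarith [hRu, mul_comm R ‖u‖]
        have htR : ‖t‖ < R := by
          refine lt_of_le_of_lt htle ?_
          nlinarith
        refine Or.inr ⟨fun k => (⟨w k, hw1 k⟩ : ℤ_[p]), h, hhn, fun x hx => ?_⟩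
        have hxw : ∀ k, ‖x k - w k‖ ≤ (p:ℝ)⁻¹ := fun k => hx k
        have hx1 : ∀ k, ‖x k‖ ≤ 1 := by
          intro k
          have : x k = (x k - w k) + w k := by ring
          rw [this]
          exact le_trans (Padic.nonarchimedean _ _)
            (max_le (le_trans (hxw k) hpinv_le) (hw1 k))
        have hxh1 : ∀ k, ‖(x + h) k‖ ≤ 1 := by
          intro k
          refine le_trans (Padic.nonarchimedean _ _) (max_le (hx1 k) ?_)
          exact le_trans (le_trans (norm_le_pi_norm h k) hhn.le) hpinv_le
        have hfx : f x = M.mulVec x + c₀ := haff' x hx1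
        have hfxh : f (x + h) = (M.mulVec x + c₀) + Pi.single i t := by
          rw [haff' _ hxh1, Matrix.mulVec_add, hMh, add_right_comm]
        have hsmall : ‖(M.mulVec x) i - (M.mulVec w) i‖ ≤ (p:ℝ)⁻¹ * R := by
          have hsub : (M.mulVec x) i - (M.mulVec w) i = (M.mulVec (x - w)) i := by
            rw [Matrix.mulVec_sub]
            rfl
          rw [hsub]
          refine norm_mulVec_entry_le M (x - w) i (by positivity) (fun j => ?_)
          calc ‖M i j‖ * ‖(x - w) j‖ ≤ R * (p:ℝ)⁻¹ :=
              mul_le_mul (hRle j) (hxw j) (norm_nonneg _) (le_of_lt hRpos)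
            _ = (p:ℝ)⁻¹ * R := mul_comm _ _
        have hsmall' : ‖(M.mulVec x) i - (M.mulVec w) i‖ < R :=
          lt_of_le_of_lt hsmall (by nlinarith)
        have he1 : (M.mulVec x + c₀) i = π + ((M.mulVec x) i - (M.mulVec w) i) := by
          show (M.mulVec x) i + c₀ i = _
          rw [hgw]
          ring
        have hgi : ‖(M.mulVec x + c₀) i‖ = R := by
          rw [he1, Padic.add_eq_max_of_ne (by rw [hπn]; exact (ne_of_lt hsmall').symm),
            hπn]
          exact max_eq_left (le_of_lt hsmall')
        have hgit : ‖(((M.mulVec x + c₀) + Pi.single i t : Fin bo → ℚ_[p])) i‖ = R := by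
          have he2 : (((M.mulVec x + c₀) + Pi.single i t : Fin bo → ℚ_[p])) i
              = π + (((M.mulVec x) i - (M.mulVec w) i) + t) := by
            simp only [Pi.add_apply, Pi.single_eq_same]
            simp only [← Pi.add_apply (M.mulVec x) c₀, he1]
            ring
          have hcomb : ‖((M.mulVec x) i - (M.mulVec w) i) + t‖ < R :=
            lt_of_le_of_lt (Padic.nonarchimedean _ _)
              (max_lt hsmall' htR)
          rw [he2, Padic.add_eq_max_of_ne (by rw [hπn]; exact (ne_of_lt hcomb).symm),
            hπn]
          exact max_eq_left (le_of_lt hcomb)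
        have hσeq : (fun k => pReLU p (f (x + h) k)) = (fun k => pReLU p (f x k)) := by
          funext k
          rw [hfxh, hfx]
          by_cases hk : k = i
          · subst hk
            rw [pReLU_of_gt (by rw [hgit]; exact hR1),
              pReLU_of_gt (by rw [hgi]; exact hR1)]
          · have : (((M.mulVec x + c₀) + Pi.single i t : Fin bo → ℚ_[p])) k = (M.mulVec x + c₀) k := by
              simp only [Pi.add_apply, Pi.single_eq_of_ne hk, add_zero]
            rw [this]
        show A.mulVec (fun k => pReLU p (f (x + h) k)) + d
            = A.mulVec (fun k => pReLU p (f x k)) + d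
        rw [hσeq]
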